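/- Let p, q > 0 and let t be a real number with |t| < π/2. Then ∫_0^∞ x^{p−1} e^{−q x} sin(q x tan t) dx = (Γ(p)/q^p) cos^p(t) sin(p t), where Γ is Euler's gamma function. -/

import Mathlib

open Real MeasureTheory Complex Set Filter Metric
open scoped Topology
set_option maxHeartbeats 1000000

private lemma aux_norm {a w : ℂ} {x : ℝ} (hx : 0 < x) :
    ‖(x : ℂ) ^ a * Complex.exp (-(w * x))‖ = x ^ a.re * Real.exp (-(w.re * x)) := by
  rw [norm_mul,
    Complex.norm_cpow_eq_rpow_re_of_pos hx, Complex.norm_exp]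
  congr 2
  simp [Complex.mul_re]

private lemma aux_meas (a w : ℂ) :
    AEStronglyMeasurable (fun x : ℝ => (x : ℂ) ^ a * Complex.exp (-(w * x)))
      (volume.restrict (Ioi (0:ℝ))) := by
  refine (ContinuousOn.mul ?_ ?_).aestronglyMeasurable measurableSet_Ioi
  · intro x hx
    exact ((Complex.continuous_ofReal.continuousAt.cpow continuousAt_const
      (by simp only [Complex.mem_slitPlane_iff, Complex.ofReal_re]; exact Or.inl hx))).continuousWithinAt
  · exact (Continuous.cexp (by continuity)).continuousOn

private lemma aux_bound_int {s c : ℝ} (hs : -1 < s) (hc : 0 < c) :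
    IntegrableOn (fun x : ℝ => x ^ s * Real.exp (-(c * x))) (Ioi 0) := by
  simpa [Real.rpow_one, neg_mul] using
    integrableOn_rpow_mul_exp_neg_mul_rpow hs one_pos hc

private lemma aux_int {a w : ℂ} (ha : -1 < a.re) (hw : 0 < w.re) :
    IntegrableOn (fun x : ℝ => (x : ℂ) ^ a * Complex.exp (-(w * x))) (Ioi 0) := by
  refine (aux_bound_int ha hw).mono' (aux_meas a w) ?_
  rw [ae_restrict_iff' measurableSet_Ioi]
  filter_upwards with x hx
  rw [aux_norm hx]

/-- Laplace transform of `x^(p-1)` for complex parameter with positive real part. -/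
private lemma laplace_eq (p : ℝ) (hp : 0 < p) {z : ℂ} (hz : 0 < z.re) :
    ∫ x in Ioi (0:ℝ), (x : ℂ) ^ ((p:ℂ) - 1) * Complex.exp (-(z * x)) =
      Complex.Gamma p * z ^ (-(p:ℂ)) := by
  set f : ℂ → ℂ := fun z => ∫ x in Ioi (0:ℝ), (x : ℂ) ^ ((p:ℂ) - 1) * Complex.exp (-(z * x))
  set g : ℂ → ℂ := fun z => Complex.Gamma p * z ^ (-(p:ℂ))
  have hre : ((p:ℂ) - 1).re = p - 1 := by simp
  have hre' : (-1:ℝ) < ((p:ℂ) - 1).re := by rw [hre]; linarith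
  set U : Set ℂ := {z : ℂ | 0 < z.re}
  have hU_open : IsOpen U := isOpen_lt continuous_const Complex.continuous_re
  have hg_an : AnalyticOnNhd ℂ g U := by
    refine DifferentiableOn.analyticOnNhd (fun w hw => ?_) hU_open
    refine ((differentiableAt_const _).mul ?_).differentiableWithinAt
    exact (differentiableAt_id.cpow (differentiableAt_const _)
      (by simp only [Complex.mem_slitPlane_iff]; exact Or.inl hw))
  have hf_an : AnalyticOnNhd ℂ f U := by
    refine DifferentiableOn.analyticOnNhd (fun w hw => ?_) hU_open
    have hwre : 0 < w.re := hw
    set ε : ℝ := w.re / 2 with hε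
    have hε0 : 0 < ε := by positivity
    have hball : ∀ v ∈ ball w ε, ε ≤ v.re := by
      intro v hv
      have : |v.re - w.re| ≤ ‖v - w‖ := by
        simpa using Complex.abs_re_le_norm (v - w)
      have h2 : ‖v - w‖ < ε := by simpa [dist_eq_norm] using hv
      have := abs_lt.mp (lt_of_le_of_lt this h2)
      linarith [this.1]
    have hmeas : ∀ᶠ v in 𝓝 w, AEStronglyMeasurable
        (fun x : ℝ => (x : ℂ) ^ ((p:ℂ) - 1) * Complex.exp (-(v * x)))
        (volume.restrict (Ioi (0:ℝ))) :=
      Eventually.of_forall fun v => aux_meas ((p:ℂ) - 1) v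
    have hint : Integrable (fun x : ℝ => (x : ℂ) ^ ((p:ℂ) - 1) * Complex.exp (-(w * x)))
        (volume.restrict (Ioi (0:ℝ))) := aux_int hre' hwre
    have hmeas' : AEStronglyMeasurable
        (fun x : ℝ => ((x : ℂ) ^ ((p:ℂ) - 1) * Complex.exp (-(w * x))) * (-(x:ℂ)))
        (volume.restrict (Ioi (0:ℝ))) :=
      (aux_meas ((p:ℂ) - 1) w).mul (Complex.continuous_ofReal.neg.aestronglyMeasurable).restrict
    have hbound : ∀ᵐ (x : ℝ) ∂(volume.restrict (Ioi (0:ℝ))), ∀ v ∈ ball w ε,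
        ‖((x : ℂ) ^ ((p:ℂ) - 1) * Complex.exp (-(v * x))) * (-(x:ℂ))‖
          ≤ x ^ p * Real.exp (-(ε * x)) := by
      rw [ae_restrict_iff' measurableSet_Ioi]
      filter_upwards with x hx v hv
      have hx : (0:ℝ) < x := hx
      have hxx : ‖((x : ℂ) ^ ((p:ℂ) - 1) * Complex.exp (-(v * x))) * (-(x:ℂ))‖
          = x ^ (p - 1) * Real.exp (-(v.re * x)) * x := by
        rw [norm_mul, aux_norm hx, hre]
        simp [abs_of_pos hx]
      rw [hxx]
      have h1 : x ^ (p - 1) * x = x ^ p := by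
        nth_rewrite 2 [← Real.rpow_one x]
        rw [← Real.rpow_add hx]
        ring_nf
      calc x ^ (p - 1) * Real.exp (-(v.re * x)) * x
          = x ^ p * Real.exp (-(v.re * x)) := by rw [mul_right_comm, h1]
        _ ≤ x ^ p * Real.exp (-(ε * x)) := by
            have hxp : (0:ℝ) ≤ x ^ p := by positivity
            have : Real.exp (-(v.re * x)) ≤ Real.exp (-(ε * x)) :=
              Real.exp_le_exp.2 (by nlinarith [hball v hv, hx.le])
            exact mul_le_mul_of_nonneg_left this hxp
    have hbint : Integrable (fun x : ℝ => x ^ p * Real.exp (-(ε * x)))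
        (volume.restrict (Ioi (0:ℝ))) := aux_bound_int (by linarith) hε0
    have hdiff : ∀ᵐ (x : ℝ) ∂(volume.restrict (Ioi (0:ℝ))), ∀ v ∈ ball w ε,
        HasDerivAt (fun v : ℂ => (x : ℂ) ^ ((p:ℂ) - 1) * Complex.exp (-(v * x)))
          (((x : ℂ) ^ ((p:ℂ) - 1) * Complex.exp (-(v * x))) * (-(x:ℂ))) v := by
      filter_upwards with x v hv
      have h1 : HasDerivAt (fun v : ℂ => -(v * x)) (-(x:ℂ)) v := by
        exact (hasDerivAt_mul_const (x:ℂ)).neg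
      simpa [mul_assoc] using (h1.cexp).const_mul ((x : ℂ) ^ ((p:ℂ) - 1))
    have key := hasDerivAt_integral_of_dominated_loc_of_deriv_le (ball_mem_nhds w hε0) hmeas hint hmeas'
      hbound hbint hdiff
    exact key.2.differentiableAt.differentiableWithinAt
  have hU_conn : IsPreconnected U := (convex_halfSpace_re_gt 0).isPreconnected
  have h1U : (1:ℂ) ∈ U := by simp [U]
  have hreal : ∀ s : ℝ, 0 < s → f s = g s := by
    intro s hs
    have h := Complex.integral_cpow_mul_exp_neg_mul_Ioi
      (a := (p:ℂ)) (r := s) (by simpa using hp) hs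
    have harg : (s:ℂ).arg ≠ π := by
      rw [Complex.arg_ofReal_of_nonneg hs.le]
      exact pi_ne_zero.symm
    calc f s = ∫ x in Ioi (0:ℝ), (x : ℂ) ^ ((p:ℂ) - 1) * Complex.exp (-((s:ℝ) * x)) := by
          simp [f, Complex.ofReal_mul]
      _ = (1/(s:ℂ)) ^ (p:ℂ) * Complex.Gamma p := h
      _ = g s := by
          rw [one_div, Complex.inv_cpow _ _ harg, ← Complex.cpow_neg, mul_comm]
  have hfreq : ∃ᶠ w in 𝓝[≠] (1:ℂ), f w = g w := by
    have hmap : Tendsto (fun s : ℝ => (s:ℂ)) (𝓝[≠] (1:ℝ)) (𝓝[≠] (1:ℂ)) := by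
      apply tendsto_nhdsWithin_of_tendsto_nhds_of_eventually_within
      · exact (Complex.continuous_ofReal.tendsto 1).mono_left nhdsWithin_le_nhds
      · filter_upwards [self_mem_nhdsWithin] with s hs
        simpa [Complex.ofReal_eq_one] using hs
    apply hmap.frequently
    have hev : ∀ᶠ (s : ℝ) in 𝓝[≠] (1:ℝ), f (s:ℂ) = g (s:ℂ) := by
      filter_upwards [eventually_nhdsWithin_of_eventually_nhds
        (eventually_gt_nhds one_pos)] with s hs
      exact hreal s hs
    exact hev.frequently
  exact hf_an.eqOn_of_preconnected_of_frequently_eq hg_an hU_conn h1U hfreq hz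

/-- For `p, q > 0` and `|t| < π/2`:
`∫_0^∞ x^{p-1} e^{-q x} sin(q x tan t) dx = (Γ(p)/q^p) cos^p(t) sin(p t)`. -/
theorem integral_rpow_exp_sin (p q t : ℝ) (hp : 0 < p) (hq : 0 < q)
    (ht : |t| < π / 2) :
    ∫ x in Set.Ioi (0 : ℝ), x ^ (p - 1) * Real.exp (-q * x) * Real.sin (q * x * Real.tan t) =
      Real.Gamma p / q ^ p * Real.cos t ^ p * Real.sin (p * t) := by
  obtain ⟨ht1, ht2⟩ := abs_lt.mp ht
  have hcos : 0 < Real.cos t := Real.cos_pos_of_mem_Ioo ⟨ht1, ht2⟩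
  set z : ℂ := (q : ℂ) - (q * Real.tan t : ℝ) * Complex.I with hzdef
  have hzre : z.re = q := by simp [hzdef]
  have hre' : (-1:ℝ) < ((p:ℂ) - 1).re := by simp; linarith
  have hInt : IntegrableOn (fun x : ℝ => (x : ℂ) ^ ((p:ℂ) - 1) * Complex.exp (-(z * x)))
      (Ioi 0) := aux_int hre' (by rw [hzre]; exact hq)
  have hIm : ∀ x ∈ Ioi (0:ℝ),
      x ^ (p - 1) * Real.exp (-q * x) * Real.sin (q * x * Real.tan t)
        = ((x : ℂ) ^ ((p:ℂ) - 1) * Complex.exp (-(z * x))).im := by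
    intro x hx
    have hx : (0:ℝ) < x := hx
    have h1 : (x:ℂ) ^ ((p:ℂ) - 1) = ((x ^ (p-1) : ℝ) : ℂ) := by
      rw [Complex.ofReal_cpow hx.le]
      push_cast
      ring_nf
    have h2 : -(z * x) = ((-(q*x) : ℝ) : ℂ) + ((q * x * Real.tan t : ℝ) : ℂ) * Complex.I := by
      rw [hzdef]
      push_cast
      ring
    rw [h1, h2, Complex.exp_add, ← Complex.ofReal_exp, Complex.exp_mul_I,
      ← Complex.ofReal_cos, ← Complex.ofReal_sin]
    simp only [Complex.mul_im, Complex.mul_re, Complex.add_im, Complex.add_re,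
      Complex.ofReal_re, Complex.ofReal_im, Complex.I_re, Complex.I_im]
    ring_nf
  have habs : ‖z‖ = q / Real.cos t ∧ Complex.arg z = -t := by
    have hzeq : z = ((q / Real.cos t : ℝ) : ℂ) *
        (Complex.cos ((-t : ℝ) : ℂ) + Complex.sin ((-t : ℝ) : ℂ) * Complex.I) := by
      rw [← Complex.ofReal_cos, ← Complex.ofReal_sin, Real.cos_neg, Real.sin_neg]
      rw [Complex.ext_iff]
      constructor
      · simp only [hzdef, Complex.sub_re, Complex.mul_re, Complex.add_re, Complex.mul_im,
          Complex.ofReal_re, Complex.ofReal_im, Complex.I_re, Complex.I_im, Complex.neg_re,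
          Complex.neg_im, Complex.add_im, Complex.sub_im]
        field_simp
        ring
      · simp only [hzdef, Complex.sub_re, Complex.mul_re, Complex.add_re, Complex.mul_im,
          Complex.ofReal_re, Complex.ofReal_im, Complex.I_re, Complex.I_im, Complex.neg_re,
          Complex.neg_im, Complex.add_im, Complex.sub_im, Real.tan_eq_sin_div_cos]
        field_simp
        ring
    constructor
    · rw [hzeq, norm_mul, Complex.norm_cos_add_sin_mul_I, Complex.norm_real, Real.norm_eq_abs,
        abs_of_pos (by positivity), mul_one]
    · rw [hzeq]
      exact Complex.arg_mul_cos_add_sin_mul_I (by positivity)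
        ⟨by linarith [Real.pi_gt_three], by linarith [Real.pi_gt_three]⟩
  have hz0 : z ≠ 0 := by
    intro h
    rw [h] at hzre
    simp at hzre
    linarith
  have hlog : Complex.log z = ((Real.log (q / Real.cos t) : ℝ) : ℂ) + ((-t : ℝ) : ℂ) * Complex.I := by
    rw [Complex.log, habs.1, habs.2]
  have hr : (0:ℝ) < q / Real.cos t := by positivity
  have hzpow : z ^ (-(p:ℂ)) = (((q / Real.cos t) ^ (-p) : ℝ) : ℂ) *
      (Complex.cos ((p * t : ℝ) : ℂ) + Complex.sin ((p * t : ℝ) : ℂ) * Complex.I) := by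
    rw [Complex.cpow_def_of_ne_zero hz0, hlog]
    have : (((Real.log (q / Real.cos t) : ℝ) : ℂ) + ((-t : ℝ) : ℂ) * Complex.I) * (-(p:ℂ))
        = ((-(p * Real.log (q / Real.cos t)) : ℝ) : ℂ) + ((p * t : ℝ) : ℂ) * Complex.I := by
      push_cast; ring
    rw [this, Complex.exp_add, ← Complex.ofReal_exp, Complex.exp_mul_I]
    congr 1
    rw [Real.rpow_def_of_pos hr]
    push_cast
    ring_nf
  calc ∫ x in Ioi (0:ℝ), x ^ (p - 1) * Real.exp (-q * x) * Real.sin (q * x * Real.tan t)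
      = ∫ x in Ioi (0:ℝ), ((x : ℂ) ^ ((p:ℂ) - 1) * Complex.exp (-(z * x))).im :=
        setIntegral_congr_fun measurableSet_Ioi hIm
    _ = (∫ x in Ioi (0:ℝ), (x : ℂ) ^ ((p:ℂ) - 1) * Complex.exp (-(z * x))).im := by
        have := integral_im (μ := volume.restrict (Ioi (0:ℝ))) hInt
        simpa using this
    _ = (Complex.Gamma p * z ^ (-(p:ℂ))).im := by
        rw [laplace_eq p hp (by rw [hzre]; exact hq)]
    _ = Real.Gamma p / q ^ p * Real.cos t ^ p * Real.sin (p * t) := by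
        rw [hzpow, Complex.Gamma_ofReal, ← Complex.ofReal_cos, ← Complex.ofReal_sin]
        simp only [Complex.mul_im, Complex.mul_re, Complex.add_im, Complex.add_re,
          Complex.ofReal_re, Complex.ofReal_im, Complex.I_re, Complex.I_im]
        rw [Real.rpow_neg hr.le, Real.div_rpow hq.le hcos.le]
        field_simp
        ring
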